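/- arXiv:2502.19775 — 2 statements merged into one kernel-verified Lean document; each statement's English description precedes it below -/
import Mathlib

section
/- Let β, δ, K, C₀ > 0, k > 1 and K₁ ≥ 1. There exist constants M̄ > 0 and C' > 0, depending only on β, δ, k, K₁, C₀, such that the following holds for every M₀ ≥ M̄ and every τ* > 0. Suppose ν : [0, τ*] → (0, e^{−1}) is differentiable with (1/K₁) e^{−√(βτ + M₀)} ≤ ν(τ) ≤ K₁ e^{−√(βτ + M₀)} and |ν'(τ)/ν(τ)| ≤ C₀/|log ν(τ)| for all τ ∈ [0, τ*], and f : [0, τ*] → [0, ∞) is differentiable with f'(τ) ≤ −δ f(τ) + K ν(τ)^k/(log ν(τ))² for all τ ∈ [0, τ*]. Then for every τ ∈ [0, τ*]: f(τ) ≤ K ν(τ)^k/(δ (log ν(τ))²) + C' K ν(τ)^k/|log ν(τ)|³ + f(0) e^{−δτ}. -/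
open MeasureTheory

set_option maxHeartbeats 2000000
noncomputable section

/-- Gronwall-type differential inequality lemma in the bootstrap regime. -/
theorem stmt11 (β δ K C₀ k K₁ : ℝ) (hβ : 0 < β) (hδ : 0 < δ) (hK : 0 < K)
    (hC₀ : 0 < C₀) (hk : 1 < k) (hK₁ : 1 ≤ K₁) :
    ∃ Mbar : ℝ, 0 < Mbar ∧ ∃ C' : ℝ, 0 < C' ∧
      ∀ M₀ : ℝ, Mbar ≤ M₀ → ∀ τstar : ℝ, 0 < τstar →
      ∀ ν ν' f f' : ℝ → ℝ,
        (∀ τ ∈ Set.Icc (0 : ℝ) τstar, HasDerivAt ν (ν' τ) τ) →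
        (∀ τ ∈ Set.Icc (0 : ℝ) τstar, 0 < ν τ ∧ ν τ < Real.exp (-1)) →
        (∀ τ ∈ Set.Icc (0 : ℝ) τstar,
            (1 / K₁) * Real.exp (-Real.sqrt (β * τ + M₀)) ≤ ν τ ∧
              ν τ ≤ K₁ * Real.exp (-Real.sqrt (β * τ + M₀))) →
        (∀ τ ∈ Set.Icc (0 : ℝ) τstar, |ν' τ / ν τ| ≤ C₀ / |Real.log (ν τ)|) →
        (∀ τ ∈ Set.Icc (0 : ℝ) τstar, HasDerivAt f (f' τ) τ) →
        (∀ τ ∈ Set.Icc (0 : ℝ) τstar, 0 ≤ f τ) →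
        (∀ τ ∈ Set.Icc (0 : ℝ) τstar,
            f' τ ≤ -δ * f τ + K * ν τ ^ k / (Real.log (ν τ)) ^ 2) →
        ∀ τ ∈ Set.Icc (0 : ℝ) τstar,
          f τ ≤ K * ν τ ^ k / (δ * (Real.log (ν τ)) ^ 2)
              + C' * K * ν τ ^ k / |Real.log (ν τ)| ^ 3
              + f 0 * Real.exp (-δ * τ) := by
  have hlogK₁ : 0 ≤ Real.log K₁ := Real.log_nonneg hK₁
  have hbase : 0 < Real.log K₁ + 2 * C₀ * (k + 3) / δ + 1 := by positivity
  have hk2 : (0:ℝ) < k + 2 := by linarith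
  refine ⟨(Real.log K₁ + 2 * C₀ * (k + 3) / δ + 1) ^ 2, pow_pos hbase 2,
    2 * C₀ * (k + 2) / δ ^ 2, div_pos (by positivity) (by positivity), ?_⟩
  intro M₀ hM₀ τstar hτstar ν ν' f f' hνd hν01 hνbd hνr hfd hfnn hfODE
  set C' : ℝ := 2 * C₀ * (k + 2) / δ ^ 2 with hC'
  have hC'pos : 0 < C' := by rw [hC']; exact div_pos (by positivity) (by positivity)
  set A : ℝ → ℝ := fun t => K / δ * ν t ^ k / Real.log (ν t) ^ 2
      - C' * K * ν t ^ k / Real.log (ν t) ^ 3 with hAdef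
  set g : ℝ → ℝ := fun t => Real.exp (δ * t) * (f t - A t) with hgdef
  -- pointwise facts
  have hfact : ∀ x ∈ Set.Icc (0 : ℝ) τstar,
      0 < ν x ∧ Real.log (ν x) < -1 ∧ δ * Real.log (ν x) ≤ -(2 * C₀ * (k + 3)) - δ ∧
        |ν' x / ν x * Real.log (ν x)| ≤ C₀ := by
    intro x hx
    obtain ⟨hn, hne⟩ := hν01 x hx
    have hL1 : Real.log (ν x) < -1 := by
      have := Real.log_lt_log hn hne
      rwa [Real.log_exp] at this
    have hK₁pos : (0:ℝ) < K₁ := lt_of_lt_of_le one_pos hK₁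
    have hlog2 : Real.log (ν x) ≤ Real.log K₁ - Real.sqrt (β * x + M₀) := by
      have h := Real.log_le_log hn (hνbd x hx).2
      rwa [Real.log_mul hK₁pos.ne' (Real.exp_ne_zero _), Real.log_exp, ← sub_eq_add_neg] at h
    have hsq : Real.log K₁ + 2 * C₀ * (k + 3) / δ + 1 ≤ Real.sqrt (β * x + M₀) := by
      have h1 : (Real.log K₁ + 2 * C₀ * (k + 3) / δ + 1) ^ 2 ≤ β * x + M₀ := by
        nlinarith [mul_nonneg hβ.le hx.1]
      calc Real.log K₁ + 2 * C₀ * (k + 3) / δ + 1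
          = Real.sqrt ((Real.log K₁ + 2 * C₀ * (k + 3) / δ + 1) ^ 2) :=
            (Real.sqrt_sq hbase.le).symm
        _ ≤ _ := Real.sqrt_le_sqrt h1
    have hLle : Real.log (ν x) ≤ -(2 * C₀ * (k + 3) / δ) - 1 := by linarith
    have hδL : δ * Real.log (ν x) ≤ -(2 * C₀ * (k + 3)) - δ := by
      have h := mul_le_mul_of_nonneg_left hLle hδ.le
      have h2 : δ * (2 * C₀ * (k + 3) / δ) = 2 * C₀ * (k + 3) := by
        field_simp
      nlinarith
    have hLne : Real.log (ν x) ≠ 0 := by intro h; rw [h] at hL1; norm_num at hL1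
    have ht : |ν' x / ν x * Real.log (ν x)| ≤ C₀ := by
      have hr := hνr x hx
      have hLabs : 0 < |Real.log (ν x)| := abs_pos.mpr hLne
      calc |ν' x / ν x * Real.log (ν x)| = |ν' x / ν x| * |Real.log (ν x)| := abs_mul _ _
        _ ≤ C₀ / |Real.log (ν x)| * |Real.log (ν x)| :=
            mul_le_mul_of_nonneg_right hr (abs_nonneg _)
        _ = C₀ := div_mul_cancel₀ _ hLabs.ne'
    exact ⟨hn, hL1, hδL, ht⟩
  -- the derivative of g
  have hgderiv : ∀ x ∈ Set.Icc (0 : ℝ) τstar, HasDerivAt g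
      (Real.exp (δ * x) * (δ * (f x - A x) + (f' x
        - (K * ν x ^ k * (ν' x / ν x) * (k * Real.log (ν x) - 2) / (δ * Real.log (ν x) ^ 3)
           - C' * K * ν x ^ k * (ν' x / ν x) * (k * Real.log (ν x) - 3) / Real.log (ν x) ^ 4)))) x := by
    intro x hx
    obtain ⟨hn, hL1, hδL, ht⟩ := hfact x hx
    have hLne : Real.log (ν x) ≠ 0 := by intro h; rw [h] at hL1; norm_num at hL1
    have h1 : HasDerivAt (fun t => ν t ^ k) (ν' x * k * ν x ^ (k - 1)) x :=
      (hνd x hx).rpow_const (Or.inl hn.ne')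
    have hlog : HasDerivAt (fun t => Real.log (ν t)) (ν' x / ν x) x :=
      (hνd x hx).log hn.ne'
    have h2 := hlog.pow 2
    have h3 := hlog.pow 3
    have hu1 := (h1.const_mul (K / δ)).div h2 (pow_ne_zero 2 hLne)
    have hu2 := (h1.const_mul (C' * K)).div h3 (pow_ne_zero 3 hLne)
    have hA' := hu1.sub hu2
    have hexp : HasDerivAt (fun t : ℝ => Real.exp (δ * t)) (Real.exp (δ * x) * δ) x := by
      simpa using ((hasDerivAt_id x).const_mul δ).exp
    have hsum := hexp.mul ((hfd x hx).sub hA')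
    rw [hgdef, hAdef]
    convert hsum using 1
    case e'_4 => rfl
    case e'_5 => rfl
    case e'_8 => rfl
    have hrw : ν x ^ (k - 1) = ν x ^ k / ν x := by
      rw [Real.rpow_sub hn, Real.rpow_one]
    rw [hrw]
    simp only [Pi.sub_apply, Pi.div_apply, Pi.pow_apply, Pi.mul_apply]
    push_cast
    field_simp
  -- deriv nonpositive on interior
  have hdiff : DifferentiableOn ℝ g (interior (Set.Icc (0:ℝ) τstar)) := by
    intro x hxint
    exact ((hgderiv x (interior_subset hxint)).differentiableAt).differentiableWithinAt
  have hcont : ContinuousOn g (Set.Icc (0:ℝ) τstar) := fun x hx =>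
    ((hgderiv x hx).differentiableAt).continuousAt.continuousWithinAt
  have hderiv_nonpos : ∀ x ∈ interior (Set.Icc (0:ℝ) τstar), deriv g x ≤ 0 := by
    intro x hxint
    have hx : x ∈ Set.Icc (0:ℝ) τstar := interior_subset hxint
    have hgd := hgderiv x hx
    rw [hgd.deriv]
    obtain ⟨hn, hL1, hδL, ht⟩ := hfact x hx
    have hLne : Real.log (ν x) ≠ 0 := by intro h; rw [h] at hL1; norm_num at hL1
    have hLneg : Real.log (ν x) < 0 := by linarith
    set L := Real.log (ν x) with hLdef
    set P := ν x ^ k with hPdef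
    have hP : 0 < P := Real.rpow_pos_of_pos hn k
    set r := ν' x / ν x with hrdef
    have hkey : K * P / L ^ 2 ≤ δ * A x
        + (K * P * r * (k * L - 2) / (δ * L ^ 3)
           - C' * K * P * r * (k * L - 3) / L ^ 4) := by
      have htle : r * L ≤ C₀ := by
        have := (abs_le.mp ht).2; linarith
      have hsq : (0:ℝ) < L ^ 2 := by positivity
      have e1 : 0 ≤ δ * ((C₀ - r * L) * (k * L ^ 2 - 2 * L)) := by
        apply mul_nonneg hδ.le
        apply mul_nonneg (by linarith)
        nlinarith
      have e2 : 0 ≤ 2 * C₀ * (k + 2) * ((C₀ - r * L) * (3 - k * L)) := by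
        apply mul_nonneg (by positivity)
        apply mul_nonneg (by linarith)
        nlinarith
      have e3 : 0 ≤ C₀ * (k + 2) * ((-(2 * C₀ * (k + 3)) - δ * L) * (-L)) := by
        apply mul_nonneg (by positivity)
        apply mul_nonneg (by linarith) (by linarith)
      have e4 : 0 ≤ (-(L + 1)) * (6 * C₀ ^ 2 * (k + 2) - 2 * δ * C₀ * L) := by
        apply mul_nonneg (by linarith)
        nlinarith [mul_pos hδ hC₀]
      have hR : 0 ≤ 2 * C₀ * (k + 2) * δ * L ^ 2 - δ * (r * L) * (k * L ^ 2 - 2 * L)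
          + 2 * C₀ * (k + 2) * (r * L) * (k * L - 3) := by nlinarith [e1, e2, e3, e4]
      rw [← sub_nonneg, hAdef]
      have heq : δ * (K / δ * P / L ^ 2 - C' * K * P / L ^ 3)
          + (K * P * r * (k * L - 2) / (δ * L ^ 3) - C' * K * P * r * (k * L - 3) / L ^ 4)
          - K * P / L ^ 2
          = K * P * (2 * C₀ * (k + 2) * δ * L ^ 2 - δ * (r * L) * (k * L ^ 2 - 2 * L)
              + 2 * C₀ * (k + 2) * (r * L) * (k * L - 3)) / (δ ^ 2 * (-L) ^ 5) := by
        rw [hC']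
        rw [show (-L) ^ 5 = -(L ^ 5) by ring]
        field_simp [hLne, hδ.ne']
        ring
      rw [heq]
      have hnegL : (0:ℝ) < -L := by linarith
      exact div_nonneg (mul_nonneg (by positivity) hR) (by positivity)
    have hf' := hfODE x hx
    have hinner : δ * (f x - A x) + (f' x
        - (K * P * r * (k * L - 2) / (δ * L ^ 3)
           - C' * K * P * r * (k * L - 3) / L ^ 4)) ≤ 0 := by linarith
    exact mul_nonpos_iff.mpr (Or.inl ⟨(Real.exp_pos _).le, hinner⟩)
  have hmono : AntitoneOn g (Set.Icc 0 τstar) :=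
    antitoneOn_of_deriv_nonpos (convex_Icc _ _) hcont hdiff hderiv_nonpos
  intro τ hτmem
  have h0 : (0:ℝ) ∈ Set.Icc (0:ℝ) τstar := ⟨le_refl _, hτstar.le⟩
  have hgle : g τ ≤ g 0 := hmono h0 hτmem hτmem.1
  have hg0 : g 0 = f 0 - A 0 := by rw [hgdef]; simp
  have hgτval : g τ = Real.exp (δ * τ) * (f τ - A τ) := by rw [hgdef]
  -- A 0 ≥ 0
  have hA0 : 0 ≤ A 0 := by
    obtain ⟨hn0, hL10, _, _⟩ := hfact 0 h0
    have hLne0 : Real.log (ν 0) ≠ 0 := by intro h; rw [h] at hL10; norm_num at hL10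
    have hP0 : 0 < ν 0 ^ k := Real.rpow_pos_of_pos hn0 k
    have hcube : Real.log (ν 0) ^ 3 < 0 := by
      have h2 : 0 < Real.log (ν 0) ^ 2 := by positivity
      nlinarith
    have ht1 : 0 ≤ K / δ * ν 0 ^ k / Real.log (ν 0) ^ 2 := by positivity
    have ht2 : C' * K * ν 0 ^ k / Real.log (ν 0) ^ 3 ≤ 0 :=
      div_nonpos_of_nonneg_of_nonpos (by positivity) hcube.le
    rw [hAdef]
    simp only
    linarith
  have hstep : f τ ≤ A τ + f 0 * Real.exp (-(δ * τ)) := by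
    have h1 : Real.exp (δ * τ) * (f τ - A τ) ≤ f 0 := by
      rw [← hgτval]; linarith [hgle, hg0.symm ▸ hgle]
    have h2 : f τ - A τ = Real.exp (-(δ * τ)) * (Real.exp (δ * τ) * (f τ - A τ)) := by
      rw [← mul_assoc, ← Real.exp_add]; simp
    have h3 := mul_le_mul_of_nonneg_left h1 (Real.exp_pos (-(δ * τ))).le
    rw [← h2] at h3
    linarith [mul_comm (Real.exp (-(δ * τ))) (f 0) ▸ h3]
  obtain ⟨hnτ, hL1τ, _, _⟩ := hfact τ hτmem
  have hLneτ : Real.log (ν τ) ≠ 0 := by intro h; rw [h] at hL1τ; norm_num at hL1τ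
  have hLnegτ : Real.log (ν τ) < 0 := by linarith
  have hArw : A τ = K * ν τ ^ k / (δ * Real.log (ν τ) ^ 2)
      + C' * K * ν τ ^ k / |Real.log (ν τ)| ^ 3 := by
    rw [hAdef]
    simp only
    rw [abs_of_neg hLnegτ]
    have hnegLne : -Real.log (ν τ) ≠ 0 := neg_ne_zero.mpr hLneτ
    field_simp
    ring
  have hexpeq : Real.exp (-δ * τ) = Real.exp (-(δ * τ)) := by rw [neg_mul]
  rw [hexpeq, ← hArw]
  linarith [hstep]
end
end

section
/- Let β, δ > 0 and k > 1. There exist constants M̄ > 0 and C > 0, depending only on β, δ, k, such that for every M₀ ≥ M̄ and every τ ≥ 0: ∫_0^τ e^{δ s − k√(β s + M₀)} (β s + M₀)^{−3/2} ds ≤ (C/δ) e^{δ τ − k√(β τ + M₀)} (β τ + M₀)^{−3/2}. -/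
open MeasureTheory

noncomputable section

/-- integral estimate used to close the bootstrap. -/
theorem stmt12 (β δ k : ℝ) (hβ : 0 < β) (hδ : 0 < δ) (hk : 1 < k) :
    ∃ Mbar : ℝ, 0 < Mbar ∧ ∃ C : ℝ, 0 < C ∧
      ∀ M₀ : ℝ, Mbar ≤ M₀ → ∀ τ : ℝ, 0 ≤ τ →
        (∫ s in Set.Icc (0 : ℝ) τ,
            Real.exp (δ * s - k * Real.sqrt (β * s + M₀)) * (β * s + M₀) ^ (-(3 : ℝ) / 2))
          ≤ (C / δ) * Real.exp (δ * τ - k * Real.sqrt (β * τ + M₀))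
              * (β * τ + M₀) ^ (-(3 : ℝ) / 2) := by
  have hk0 : 0 < k := lt_trans one_pos hk
  refine ⟨max 1 (max ((2*k*β/δ)^2) (6*β/δ)), by positivity, 2, by norm_num, ?_⟩
  intro M₀ hM₀ τ hτ
  have hM1 : (1:ℝ) ≤ M₀ := le_trans (le_max_left _ _) hM₀
  have hM2 : (2*k*β/δ)^2 ≤ M₀ := le_trans (le_trans (le_max_left _ _) (le_max_right _ _)) hM₀
  have hM3 : 6*β/δ ≤ M₀ := le_trans (le_trans (le_max_right _ _) (le_max_right _ _)) hM₀
  have hM₀pos : 0 < M₀ := lt_of_lt_of_le one_pos hM1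
  set φ : ℝ → ℝ := fun s => Real.exp (δ * s - k * Real.sqrt (β * s + M₀)) * (β * s + M₀) ^ (-(3:ℝ)/2) with hφdef
  set D : ℝ → ℝ := fun s =>
    (Real.exp (δ * s - k * Real.sqrt (β * s + M₀)) * (δ - k * (1/(2*Real.sqrt (β*s+M₀)) * β)))
      * (β * s + M₀) ^ (-(3:ℝ)/2)
    + Real.exp (δ * s - k * Real.sqrt (β * s + M₀)) * ((-(3:ℝ)/2 * (β*s+M₀) ^ (-(3:ℝ)/2 - 1)) * β)
    with hDdef
  -- positivity of the base on [0, τ]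
  have hbase : ∀ s : ℝ, 0 ≤ s → 0 < β * s + M₀ := fun s hs => by positivity
  -- derivative
  have hderiv : ∀ s ∈ Set.Icc (0:ℝ) τ, HasDerivAt φ (D s) s := by
    intro s hs
    have hupos : 0 < β * s + M₀ := hbase s hs.1
    have hu : HasDerivAt (fun s => β*s+M₀) β s := by
      simpa using ((hasDerivAt_id s).const_mul β).add_const M₀
    have hsqrt : HasDerivAt (fun s => Real.sqrt (β*s+M₀)) (1/(2*Real.sqrt (β*s+M₀)) * β) s :=
      (Real.hasDerivAt_sqrt hupos.ne').comp s hu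
    have hinner : HasDerivAt (fun s => δ*s - k*Real.sqrt (β*s+M₀))
        (δ - k * (1/(2*Real.sqrt (β*s+M₀)) * β)) s := by
      have h : HasDerivAt (fun y => δ * id y - k * Real.sqrt (β*y+M₀))
          (δ * 1 - k * (1/(2*Real.sqrt (β*s+M₀)) * β)) s :=
        ((hasDerivAt_id s).const_mul δ).sub (hsqrt.const_mul k)
      simpa using h
    have hexp := hinner.exp
    have hrpow : HasDerivAt (fun s => (β*s+M₀) ^ (-(3:ℝ)/2))
        ((-(3:ℝ)/2 * (β*s+M₀) ^ (-(3:ℝ)/2 - 1)) * β) s := by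
      have h2 : HasDerivAt (fun x : ℝ => x ^ (-(3:ℝ)/2)) (-(3:ℝ)/2 * (β*s+M₀) ^ (-(3:ℝ)/2 - 1)) (β*s+M₀) :=
        Real.hasDerivAt_rpow_const (Or.inl hupos.ne')
      exact h2.comp s hu
    exact hexp.mul hrpow
  -- pointwise bound : φ ≤ (2/δ) * D on [0,τ]
  have hbound : ∀ s ∈ Set.Icc (0:ℝ) τ, φ s ≤ (2/δ) * D s := by
    intro s hs
    have hupos : 0 < β * s + M₀ := hbase s hs.1
    have huM : M₀ ≤ β * s + M₀ := by nlinarith [hs.1]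
    have hsq : 2*k*β/δ ≤ Real.sqrt (β*s+M₀) := by
      have h1 : 2*k*β/δ = Real.sqrt ((2*k*β/δ)^2) := by
        rw [Real.sqrt_sq (by positivity)]
      rw [h1]
      exact Real.sqrt_le_sqrt (le_trans hM2 huM)
    have hsqpos : 0 < Real.sqrt (β*s+M₀) := lt_of_lt_of_le (by positivity) hsq
    have hsq' : 2*k*β ≤ δ * Real.sqrt (β*s+M₀) := by
      rw [div_le_iff₀ hδ] at hsq; linarith
    -- k*β/(2*√u) ≤ δ/4
    have h1 : k * (1/(2*Real.sqrt (β*s+M₀)) * β) ≤ δ/4 := by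
      have : k * (1/(2*Real.sqrt (β*s+M₀)) * β) = k*β/(2*Real.sqrt (β*s+M₀)) := by ring
      rw [this, div_le_iff₀ (by positivity)]
      nlinarith
    have h2 : 3/2 * β / (β*s+M₀) ≤ δ/4 := by
      rw [div_le_iff₀ hupos]
      have h3 : 6*β/δ ≤ β*s+M₀ := le_trans hM3 huM
      rw [div_le_iff₀ hδ] at h3
      nlinarith
    have hrw : (β*s+M₀) ^ (-(3:ℝ)/2 - 1) = (β*s+M₀) ^ (-(3:ℝ)/2) / (β*s+M₀) :=
      Real.rpow_sub_one hupos.ne' _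
    have hrppos : 0 < (β*s+M₀) ^ (-(3:ℝ)/2) := Real.rpow_pos_of_pos hupos _
    have hepos : 0 < Real.exp (δ * s - k * Real.sqrt (β * s + M₀)) := Real.exp_pos _
    have hkey : δ/2 ≤ (δ - k * (1/(2*Real.sqrt (β*s+M₀)) * β)) - 3/2 * β / (β*s+M₀) := by
      linarith
    have hDval : D s = (Real.exp (δ * s - k * Real.sqrt (β * s + M₀)) * (β*s+M₀) ^ (-(3:ℝ)/2))
        * ((δ - k * (1/(2*Real.sqrt (β*s+M₀)) * β)) - 3/2 * β / (β*s+M₀)) := by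
      simp only [hDdef]
      rw [hrw]
      field_simp
      ring
    have hφval : φ s = Real.exp (δ * s - k * Real.sqrt (β * s + M₀)) * (β*s+M₀) ^ (-(3:ℝ)/2) := rfl
    have hEP : 0 < Real.exp (δ * s - k * Real.sqrt (β * s + M₀)) * (β*s+M₀) ^ (-(3:ℝ)/2) :=
      mul_pos hepos hrppos
    have hDge : δ/2 * φ s ≤ D s := by
      rw [hDval, hφval, mul_comm (δ/2)]
      exact mul_le_mul_of_nonneg_left hkey hEP.le
    calc φ s = (2/δ) * (δ/2 * φ s) := by field_simp
      _ ≤ (2/δ) * D s := mul_le_mul_of_nonneg_left hDge (by positivity)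
  -- continuity
  have hcontu : Continuous fun s : ℝ => β*s+M₀ := by continuity
  have hcontE : Continuous fun s : ℝ => Real.exp (δ * s - k * Real.sqrt (β * s + M₀)) :=
    Real.continuous_exp.comp (((continuous_const.mul continuous_id').sub
      (continuous_const.mul (Real.continuous_sqrt.comp hcontu))))
  have hcontP : ContinuousOn (fun s : ℝ => (β*s+M₀) ^ (-(3:ℝ)/2)) (Set.Icc 0 τ) :=
    hcontu.continuousOn.rpow_const (fun x hx => Or.inl (hbase x hx.1).ne')
  have hφcont : ContinuousOn φ (Set.Icc 0 τ) := hcontE.continuousOn.mul hcontP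
  have hDcont : ContinuousOn D (Set.Icc 0 τ) := by
    apply ContinuousOn.add
    · apply ContinuousOn.mul
      · apply hcontE.continuousOn.mul
        apply ContinuousOn.sub continuousOn_const
        apply ContinuousOn.mul continuousOn_const
        apply ContinuousOn.mul _ continuousOn_const
        exact ContinuousOn.div continuousOn_const
          ((continuous_const.mul (Real.continuous_sqrt.comp hcontu)).continuousOn)
          (fun x hx => by
            have := hbase x hx.1
            have h := Real.sqrt_pos.mpr this
            positivity)
      · exact hcontP
    · apply hcontE.continuousOn.mul
      apply ContinuousOn.mul _ continuousOn_const
      apply ContinuousOn.mul continuousOn_const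
      exact hcontu.continuousOn.rpow_const (fun x hx => Or.inl (hbase x hx.1).ne')
  have hφint : IntervalIntegrable φ volume 0 τ :=
    (by rwa [Set.uIcc_of_le hτ] : ContinuousOn φ (Set.uIcc 0 τ)).intervalIntegrable
  have hDint : IntervalIntegrable D volume 0 τ :=
    (by rwa [Set.uIcc_of_le hτ] : ContinuousOn D (Set.uIcc 0 τ)).intervalIntegrable
  have hFTC : ∫ s in (0:ℝ)..τ, D s = φ τ - φ 0 :=
    intervalIntegral.integral_eq_sub_of_hasDerivAt
      (fun x hx => hderiv x (by rwa [Set.uIcc_of_le hτ] at hx)) hDint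
  have hφ0 : 0 ≤ φ 0 := by
    apply mul_nonneg (Real.exp_pos _).le
    exact Real.rpow_nonneg (by nlinarith) _
  calc (∫ s in Set.Icc (0:ℝ) τ, φ s) = ∫ s in (0:ℝ)..τ, φ s := by
        rw [intervalIntegral.integral_of_le hτ, MeasureTheory.integral_Icc_eq_integral_Ioc]
    _ ≤ ∫ s in (0:ℝ)..τ, (2/δ) * D s :=
        intervalIntegral.integral_mono_on hτ hφint (hDint.const_mul _) hbound
    _ = (2/δ) * (φ τ - φ 0) := by rw [intervalIntegral.integral_const_mul, hFTC]
    _ ≤ (2/δ) * φ τ := mul_le_mul_of_nonneg_left (by linarith) (by positivity)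
    _ = ((2:ℝ)/δ) * Real.exp (δ * τ - k * Real.sqrt (β * τ + M₀)) * (β * τ + M₀) ^ (-(3:ℝ)/2) :=
        (mul_assoc _ _ _).symm
end
end
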